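/- The function ξ ↦ (1 - |ξ|)₊² e^{-iKξ} on ℝ (where (·)₊ denotes the positive part) is the Fourier transform of the function λ ↦ (2/π) · (λ - K - sin(λ - K)) / (λ - K)³, i.e., ∫_ℝ (2/π)((λ-K-sin(λ-K))/(λ-K)³) e^{-iλξ} dλ = (1-|ξ|)₊² e^{-iKξ} for all ξ ∈ ℝ. -/

import Mathlib

open MeasureTheory Complex
open scoped FourierTransform Real

/-- The Fejér-type kernel `F_K(λ) = (2/π)(λ - K - sin(λ-K))/(λ-K)³`, extended
continuously by the value `1/(3π)` at `λ = K`. -/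
noncomputable def fejerKernel (K : ℝ) (l : ℝ) : ℝ :=
  if l = K then 1 / (3 * Real.pi)
  else (2 / Real.pi) * (l - K - Real.sin (l - K)) / (l - K) ^ 3

lemma fejerKernel_shift (K l : ℝ) : fejerKernel K l = fejerKernel 0 (l - K) := by
  unfold fejerKernel
  simp [sub_eq_zero]

lemma hasDerivAt_aux (c a b : ℂ) (z : ℂ) :
    HasDerivAt (fun z : ℂ => Complex.exp (c * z) *
      (c ^ 2 * (a + b * z) ^ 2 - 2 * b * c * (a + b * z) + 2 * b ^ 2))
      (c ^ 3 * (a + b * z) ^ 2 * Complex.exp (c * z)) z := by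
  have h1 : HasDerivAt (fun z : ℂ => Complex.exp (c * z)) (Complex.exp (c * z) * c) z := by
    simpa [mul_comm] using ((hasDerivAt_id z).const_mul c).cexp
  have hb : HasDerivAt (fun z : ℂ => a + b * z) b z := by
    simpa using ((hasDerivAt_id z).const_mul b).const_add a
  have h2 : HasDerivAt (fun z : ℂ =>
      c ^ 2 * (a + b * z) ^ 2 - 2 * b * c * (a + b * z) + 2 * b ^ 2)
      (c ^ 2 * (2 * (a + b * z) * b) - 2 * b * c * b) z := by
    have := (((hb.pow 2).const_mul (c ^ 2)).sub (hb.const_mul (2 * b * c))).add_const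
      (2 * b ^ 2)
    exact this.congr_deriv (by ring)
  have := h1.mul h2
  exact this.congr_deriv (by ring)

lemma integral_piece (c a b : ℂ) (hc : c ≠ 0) (s u : ℝ) :
    ∫ t in s..u, (a + b * t) ^ 2 * Complex.exp (c * t) =
      (Complex.exp (c * u) * (c ^ 2 * (a + b * u) ^ 2 - 2 * b * c * (a + b * u) + 2 * b ^ 2)
      - Complex.exp (c * s) * (c ^ 2 * (a + b * s) ^ 2 - 2 * b * c * (a + b * s) + 2 * b ^ 2))
      / c ^ 3 := by
  rw [eq_div_iff (by simpa using hc), ← intervalIntegral.integral_mul_const]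
  apply intervalIntegral.integral_eq_sub_of_hasDerivAt
  · intro t ht
    have := (hasDerivAt_aux c a b t).comp_ofReal
    exact this.congr_deriv (by ring)
  · apply Continuous.intervalIntegrable
    fun_prop

lemma hasDerivAt_cubic (a b : ℂ) (z : ℂ) :
    HasDerivAt (fun z : ℂ => b * (a + b * z) ^ 3 / 3) (b ^ 2 * (a + b * z) ^ 2) z := by
  have hb : HasDerivAt (fun z : ℂ => a + b * z) b z := by
    simpa using ((hasDerivAt_id z).const_mul b).const_add a
  have := ((hb.pow 3).const_mul b).div_const 3
  exact this.congr_deriv (by push_cast; ring)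

lemma integral_piece0 (a b : ℂ) (s u : ℝ) :
    ∫ t in s..u, b ^ 2 * (a + b * t) ^ 2 =
      b * (a + b * u) ^ 3 / 3 - b * (a + b * s) ^ 3 / 3 := by
  apply intervalIntegral.integral_eq_sub_of_hasDerivAt
  · intro t ht
    exact (hasDerivAt_cubic a b t).comp_ofReal
  · apply Continuous.intervalIntegrable
    fun_prop

lemma integral_g (x : ℝ) :
    (∫ ξ : ℝ, (((max (1 - |ξ|) 0) ^ 2 : ℝ) : ℂ) * Complex.exp (Complex.I * x * ξ))
      = 2 * Real.pi * fejerKernel 0 x := by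
  have hvanish : ∀ ξ : ℝ, ξ ∉ Set.Ioc (-1 : ℝ) 1 →
      (((max (1 - |ξ|) 0) ^ 2 : ℝ) : ℂ) * Complex.exp (Complex.I * x * ξ) = 0 := by
    intro ξ hξ
    have h1 : ¬ |ξ| ≤ 1 ∨ ξ = -1 := by
      rcases lt_or_ge 1 (|ξ|) with h | h
      · exact Or.inl (not_le.2 h)
      · right
        rw [abs_le] at h
        simp only [Set.mem_Ioc, not_and_or, not_lt, not_le] at hξ
        rcases hξ with h' | h'
        · linarith [h.1]
        · linarith [h.2]
    have : max (1 - |ξ|) 0 = 0 := by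
      rcases h1 with h | h
      · exact max_eq_right (by rw [not_le] at h; linarith)
      · simp [h]
    rw [this]
    simp
  rw [← setIntegral_eq_integral_of_forall_compl_eq_zero hvanish,
    ← intervalIntegral.integral_of_le (by norm_num : (-1 : ℝ) ≤ 1)]
  have hcont : Continuous (fun ξ : ℝ =>
      (((max (1 - |ξ|) 0) ^ 2 : ℝ) : ℂ) * Complex.exp (Complex.I * x * ξ)) := by fun_prop
  rw [← intervalIntegral.integral_add_adjacent_intervals (b := (0 : ℝ))
    (hcont.intervalIntegrable _ _) (hcont.intervalIntegrable _ _)]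
  have hleft : ∀ t ∈ Set.uIcc (-1 : ℝ) 0,
      (((max (1 - |t|) 0) ^ 2 : ℝ) : ℂ) * Complex.exp (Complex.I * x * t)
        = ((1 : ℂ) + 1 * t) ^ 2 * Complex.exp ((Complex.I * x) * t) := by
    intro t ht
    rw [Set.uIcc_of_le (by norm_num)] at ht
    obtain ⟨h1, h2⟩ := ht
    rw [abs_of_nonpos h2, max_eq_left (by linarith)]
    push_cast
    ring_nf
  have hright : ∀ t ∈ Set.uIcc (0 : ℝ) 1,
      (((max (1 - |t|) 0) ^ 2 : ℝ) : ℂ) * Complex.exp (Complex.I * x * t)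
        = ((1 : ℂ) + (-1) * t) ^ 2 * Complex.exp ((Complex.I * x) * t) := by
    intro t ht
    rw [Set.uIcc_of_le (by norm_num)] at ht
    obtain ⟨h1, h2⟩ := ht
    rw [_root_.abs_of_nonneg h1, max_eq_left (by linarith)]
    push_cast
    ring_nf
  rw [intervalIntegral.integral_congr hleft, intervalIntegral.integral_congr hright]
  rcases eq_or_ne x 0 with hx | hx
  · subst hx
    simp only [Complex.ofReal_zero, mul_zero, zero_mul, Complex.exp_zero, mul_one]
    rw [show (fun t : ℝ => ((1:ℂ) + 1 * t) ^ 2) = fun t : ℝ => (1:ℂ) ^ 2 * (1 + 1 * t) ^ 2 by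
      funext t; ring]
    rw [show (fun t : ℝ => ((1:ℂ) + -1 * t) ^ 2) = fun t : ℝ => (-1:ℂ) ^ 2 * (1 + -1 * t) ^ 2 by
      funext t; ring]
    rw [integral_piece0 1 1 (-1) 0, integral_piece0 1 (-1) 0 1]
    rw [show (fejerKernel 0 0 : ℂ) = 1 / (3 * Real.pi) by rw [fejerKernel, if_pos rfl]; push_cast; ring]
    have hπ : (Real.pi : ℂ) ≠ 0 := by exact_mod_cast Real.pi_ne_zero
    push_cast
    field_simp
    ring
  · have hc : (Complex.I * x) ≠ 0 := by
      simp [Complex.I_ne_zero, Complex.ofReal_eq_zero, hx]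
    rw [integral_piece _ _ _ hc, integral_piece _ _ _ hc]
    have hfk : (fejerKernel 0 x : ℂ) = (2 / Real.pi) * (x - Real.sin x) / x ^ 3 := by
      rw [fejerKernel, if_neg hx]
      push_cast
      ring
    have hexp1 : Complex.exp (Complex.I * x) = Real.cos x + Real.sin x * Complex.I := by
      rw [mul_comm Complex.I (x:ℂ), Complex.exp_mul_I, Complex.ofReal_cos, Complex.ofReal_sin]
    have hexp2 : Complex.exp (-(Complex.I * x)) = Real.cos x - Real.sin x * Complex.I := by
      have : -(Complex.I * x) = ((-x : ℝ) : ℂ) * Complex.I := by push_cast; ring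
      rw [this, Complex.exp_mul_I, ← Complex.ofReal_cos, ← Complex.ofReal_sin,
        Real.cos_neg, Real.sin_neg]
      push_cast
      ring
    have hx' : (x : ℂ) ≠ 0 := by exact_mod_cast hx
    push_cast [hfk]
    simp only [mul_zero, mul_one, mul_neg, Complex.exp_zero]
    rw [hexp1, hexp2]
    have hπ : (Real.pi : ℂ) ≠ 0 := by exact_mod_cast Real.pi_ne_zero
    field_simp
    ring_nf
    rw [show (Complex.I : ℂ) ^ 3 = -Complex.I by simp [pow_succ, Complex.I_sq]]
    simp only [Complex.ofReal_sin]
    ring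

lemma fejer_aux_bound (x : ℝ) (hx0 : x ≠ 0) :
    |(2 / Real.pi) * (x - Real.sin x) / x ^ 3| ≤ 3 / (1 + x ^ 2) := by
  have hπ := Real.pi_gt_three
  have hπ0 := Real.pi_pos
  rw [_root_.abs_div, _root_.abs_mul, _root_.abs_div, _root_.abs_pow]
  rw [_root_.abs_of_nonneg (by norm_num : (0:ℝ) ≤ 2), _root_.abs_of_nonneg hπ0.le]
  rw [div_le_div_iff₀ (by positivity) (by positivity)]
  have habs : (0:ℝ) < |x| := abs_pos.2 hx0
  have hp : 2 / Real.pi ≤ 2 / 3 := by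
    rw [div_le_div_iff₀ hπ0 (by norm_num)]
    linarith
  set A := |x - Real.sin x| with hA
  have hA0 : 0 ≤ A := abs_nonneg _
  have step1 : 2 / Real.pi * A * (1 + x ^ 2) ≤ 2 / 3 * A * (1 + x ^ 2) := by
    have : (0:ℝ) ≤ A * (1 + x ^ 2) := by positivity
    calc 2 / Real.pi * A * (1 + x ^ 2) = 2 / Real.pi * (A * (1 + x ^ 2)) := by ring
      _ ≤ 2 / 3 * (A * (1 + x ^ 2)) := mul_le_mul_of_nonneg_right hp this
      _ = 2 / 3 * A * (1 + x ^ 2) := by ring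
  refine step1.trans ?_
  have hxx : x ^ 2 = |x| ^ 2 := (_root_.sq_abs x).symm
  rcases le_or_gt |x| 1 with h1 | h1
  · have hs := Real.sin_bound h1
    have h2 : A ≤ |x| ^ 4 * (5 / 96) + |x| ^ 3 / 6 := by
      have hrw : x - Real.sin x = -(Real.sin x - (x - x ^ 3 / 6)) + x ^ 3 / 6 := by ring
      rw [hA, hrw]
      have e : |x ^ 3 / 6| = |x| ^ 3 / 6 := by
        rw [_root_.abs_div, _root_.abs_pow]
        norm_num
      calc |(-(Real.sin x - (x - x ^ 3 / 6))) + x ^ 3 / 6|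
          ≤ |(-(Real.sin x - (x - x ^ 3 / 6)))| + |x ^ 3 / 6| := abs_add_le _ _
        _ ≤ |x| ^ 4 * (5 / 96) + |x| ^ 3 / 6 := by
            rw [_root_.abs_neg, e]
            exact add_le_add (hs.trans (by have h4 := pow_nonneg (abs_nonneg x) 4; nlinarith [mul_le_mul_of_nonneg_left h1 h4])) le_rfl
    have h3 : |x| ^ 4 ≤ |x| ^ 3 := by
      calc |x| ^ 4 = |x| ^ 3 * |x| := by ring
        _ ≤ |x| ^ 3 * 1 := by gcongr
        _ = |x| ^ 3 := by ring
    have h4 : x ^ 2 ≤ 1 := by nlinarith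
    nlinarith [pow_pos habs 3]
  · have h2 : A ≤ 2 * |x| := by
      calc A ≤ |x| + |Real.sin x| := _root_.abs_sub _ _
        _ ≤ |x| + 1 := by linarith [Real.abs_sin_le_one x]
        _ ≤ 2 * |x| := by linarith
    have h4 : 1 ≤ |x| ^ 2 := by nlinarith
    have h6 : |x| ≤ |x| ^ 3 := by nlinarith
    nlinarith [pow_pos habs 3]

lemma fejer_abs_bound (K l : ℝ) : |fejerKernel K l| ≤ 3 / (1 + (l - K) ^ 2) := by
  rcases eq_or_ne l K with h | h
  · subst h
    rw [fejerKernel, if_pos rfl, sub_self]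
    rw [_root_.abs_of_nonneg (by positivity)]
    rw [div_le_div_iff₀ (by positivity) (by norm_num)]
    nlinarith [Real.pi_gt_three]
  · rw [fejerKernel, if_neg h]
    exact fejer_aux_bound (l - K) (sub_ne_zero.2 h)

lemma fejer_measurable (K : ℝ) : Measurable (fejerKernel K) := by
  unfold fejerKernel
  apply Measurable.ite
  · exact measurableSet_eq
  · exact measurable_const
  · fun_prop

lemma fejer_integrable (K : ℝ) : Integrable (fun l : ℝ => (fejerKernel K l : ℂ)) := by
  have hmaj : Integrable (fun l : ℝ => 3 / (1 + (l - K) ^ 2)) := by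
    have h1 : Integrable (fun x : ℝ => (1 + x ^ 2)⁻¹) := integrable_inv_one_add_sq
    have h2 := (h1.comp_sub_right K).const_mul 3
    simpa [div_eq_mul_inv] using h2
  apply hmaj.mono
  · exact (Complex.measurable_ofReal.comp (fejer_measurable K)).aestronglyMeasurable
  · filter_upwards with l
    rw [Complex.norm_real, Real.norm_eq_abs, Real.norm_eq_abs,
      _root_.abs_of_nonneg (by positivity : (0:ℝ) ≤ 3 / (1 + (l - K) ^ 2))]
    exact fejer_abs_bound K l

/-- The Fourier transform of `F_K` is `ξ ↦ (1-|ξ|)₊² e^{-iKξ}`: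
`∫ F_K(λ) e^{-iλξ} dλ = (1-|ξ|)₊² e^{-iKξ}` for all `ξ ∈ ℝ`. -/
theorem fourier_fejerKernel (K : ℝ) (ξ : ℝ) :
    (∫ l : ℝ, (fejerKernel K l : ℂ) * Complex.exp (-Complex.I * l * ξ)) =
      (((max (1 - |ξ|) 0) ^ 2 : ℝ) : ℂ) * Complex.exp (-Complex.I * K * ξ) := by
  have hπ0 : (0:ℝ) < 2 * Real.pi := by positivity
  set h : ℝ → ℂ := fun v => ((1 / (2 * Real.pi) : ℝ) : ℂ) *
    ((((max (1 - |v|) 0) ^ 2 : ℝ) : ℂ) * Complex.exp (-Complex.I * K * v)) with hh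
  set G : ℝ → ℂ := fun u => (fejerKernel K (2 * Real.pi * u) : ℂ) with hG
  -- Step D : 𝓕⁻ h = G
  have hD : 𝓕⁻ h = G := by
    funext u
    rw [Real.fourierInv_eq']
    simp only [RCLike.inner_apply, conj_trivial, smul_eq_mul]
    have key : ∀ v : ℝ,
        Complex.exp (((2 * Real.pi * (v * u) : ℝ) : ℂ) * Complex.I) * h v
        = ((1 / (2 * Real.pi) : ℝ) : ℂ) * ((((max (1 - |v|) 0) ^ 2 : ℝ) : ℂ) *
            Complex.exp (Complex.I * ((2 * Real.pi * u - K : ℝ) : ℂ) * v)) := by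
      intro v
      have hexp : Complex.exp (((2 * Real.pi * (v * u) : ℝ) : ℂ) * Complex.I) *
          Complex.exp (-Complex.I * K * v)
          = Complex.exp (Complex.I * ((2 * Real.pi * u - K : ℝ) : ℂ) * v) := by
        rw [← Complex.exp_add]
        congr 1
        push_cast
        ring
      calc Complex.exp (((2 * Real.pi * (v * u) : ℝ) : ℂ) * Complex.I) * h v
          = ((1 / (2 * Real.pi) : ℝ) : ℂ) * ((((max (1 - |v|) 0) ^ 2 : ℝ) : ℂ) *
            (Complex.exp (((2 * Real.pi * (v * u) : ℝ) : ℂ) * Complex.I) *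
              Complex.exp (-Complex.I * K * v))) := by rw [hh]; ring
        _ = _ := by rw [hexp]
    simp_rw [mul_comm u]
    simp_rw [key]
    rw [MeasureTheory.integral_const_mul, integral_g (2 * Real.pi * u - K), hG]
    simp only [fejerKernel_shift K]
    push_cast
    have : ((Real.pi : ℂ)) ≠ 0 := by exact_mod_cast Real.pi_ne_zero
    field_simp
  -- integrability of h
  have hcont : Continuous h := by fun_prop
  have hsupp : HasCompactSupport h := by
    apply HasCompactSupport.intro (isCompact_Icc (a := (-1:ℝ)) (b := 1))
    intro v hv
    have hv' : ¬ |v| ≤ 1 := by rwa [abs_le, ← Set.mem_Icc]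
    rw [hh]
    simp only
    rw [max_eq_right (by push_neg at hv'; linarith)]
    norm_num
  have h_int : Integrable h := hcont.integrable_of_hasCompactSupport hsupp
  -- integrability of G
  have hG_int : Integrable G := (fejer_integrable K).comp_mul_left' hπ0.ne'
  -- integrability of 𝓕 h
  have hFh_eq : 𝓕 h = fun w => G (-w) := by
    funext w
    rw [← hD]
    simp [Real.fourierInv_eq_fourier_neg]
  have hFh_int : Integrable (𝓕 h) := by
    rw [hFh_eq]
    exact hG_int.comp_neg
  -- inversion
  have hFG : 𝓕 G = h := by
    rw [← hD]
    exact hcont.fourier_fourierInv_eq h_int hFh_int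
  -- final assembly
  set g : ℝ → ℂ := fun l => (fejerKernel K l : ℂ) * Complex.exp (-Complex.I * l * ξ) with hg
  have e := MeasureTheory.Measure.integral_comp_mul_left g (2 * Real.pi)
  have e2 : (∫ l : ℝ, g l) = (2 * Real.pi) • ∫ x : ℝ, g (2 * Real.pi * x) := by
    rw [e, smul_smul, _root_.abs_of_pos (by positivity : (0:ℝ) < (2 * Real.pi)⁻¹),
      mul_inv_cancel₀ hπ0.ne', one_smul]
  have e3 : (∫ x : ℝ, g (2 * Real.pi * x)) = 𝓕 G ξ := by
    rw [Real.fourier_eq']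
    simp only [RCLike.inner_apply, conj_trivial, smul_eq_mul]
    congr 1
    funext x
    rw [hg]
    simp only
    rw [mul_comm]
    congr 1
    congr 1
    push_cast
    ring
  rw [e2, e3, hFG, hh]
  simp only
  rw [Complex.real_smul]
  push_cast
  have : ((Real.pi : ℂ)) ≠ 0 := by exact_mod_cast Real.pi_ne_zero
  field_simp
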